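/- Let A, B ∈ M_n(ℂ), set S(t) := exp(itA/2) · exp(itB) · exp(itA/2) and F(t) := exp(−itA/2) · exp(−itB) · exp(−itA/2) · exp(it(A+B)) (so that exp(it(A+B)) = S(t) F(t)). Define A₂(t) := exp(−itA/2) · ( (1/2)(exp(−itB) A exp(itB) − A) + exp(−itB)(exp(−itA/2) B exp(itA/2) − B) exp(itB) ) · exp(itA/2). Then F is differentiable with F(0) = 1 and F′(t) = i A₂(t) F(t) for every t ∈ ℝ. -/

import Mathlib

open scoped Matrix.Norms.L2Operator
open Matrix

lemma expD {n : ℕ} (M : Matrix (Fin n) (Fin n) ℂ) (c : ℂ) (f : ℝ → ℂ)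
    (hf : ∀ s : ℝ, f s = c * (s : ℂ)) (t : ℝ) :
    HasDerivAt (fun s : ℝ => NormedSpace.exp ((f s) • M))
      ((c • M) * NormedSpace.exp ((f t) • M)) t := by
  have h := hasDerivAt_exp_smul_const' (𝕂 := ℝ) (c • M) t
  have key : ∀ s : ℝ, s • (c • M) = (f s) • M := by
    intro s
    rw [hf, ← smul_assoc]
    congr 1
    simp [Complex.real_smul, mul_comm]
  simpa only [key] using h

lemma key {R : Type*} [Ring R] (e1 e2 e3 e4 e5 m1 m2 m5 : R)
    (h31 : e3 * e1 = 1) (h42 : e4 * e2 = 1)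
    (c1 : e1 * m1 = m1 * e1) (c2 : e2 * m2 = m2 * e2)
    (hm5 : m5 = -(m1 + m1) - m2) :
    e1 * ((m1 - e2 * m1 * e4) + e2 * (m2 - e1 * m2 * e3) * e4) * e3 * (e1 * e2 * e1 * e5)
      = ((m1 * e1 * e2 + e1 * (m2 * e2)) * e1 + e1 * e2 * (m1 * e1)) * e5
        + e1 * e2 * e1 * (m5 * e5) := by
  subst hm5
  have h31' : ∀ x, e3 * (e1 * x) = x := fun x => by rw [← mul_assoc, h31, one_mul]
  have h42' : ∀ x, e4 * (e2 * x) = x := fun x => by rw [← mul_assoc, h42, one_mul]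
  have c1' : ∀ x, e1 * (m1 * x) = m1 * (e1 * x) := fun x => by rw [← mul_assoc, c1, mul_assoc]
  have c2' : ∀ x, e2 * (m2 * x) = m2 * (e2 * x) := fun x => by rw [← mul_assoc, c2, mul_assoc]
  simp only [mul_add, add_mul, mul_sub, sub_mul, mul_neg, neg_mul, neg_add, mul_assoc,
    h31', h42', c1', c2']
  abel

/-- The exact error Hamiltonian of the second-order (Strang) splitting. -/
noncomputable def A2 {n : ℕ} (A B : Matrix (Fin n) (Fin n) ℂ) (t : ℝ) :
    Matrix (Fin n) (Fin n) ℂ :=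
  NormedSpace.exp ((-(Complex.I * (t : ℂ) / 2)) • A) *
    ((1 / 2 : ℂ) •
        (NormedSpace.exp ((-(Complex.I * (t : ℂ))) • B) * A *
            NormedSpace.exp ((Complex.I * (t : ℂ)) • B) - A) +
      NormedSpace.exp ((-(Complex.I * (t : ℂ))) • B) *
        (NormedSpace.exp ((-(Complex.I * (t : ℂ) / 2)) • A) * B *
            NormedSpace.exp ((Complex.I * (t : ℂ) / 2) • A) - B) *
        NormedSpace.exp ((Complex.I * (t : ℂ)) • B)) *
    NormedSpace.exp ((Complex.I * (t : ℂ) / 2) • A)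

/-- the error unitary of the Strang splitting satisfies `F(0) = 1` and
`F'(t) = i A₂(t) F(t)`. -/
theorem stmt19 {n : ℕ} (A B : Matrix (Fin n) (Fin n) ℂ)
    (F : ℝ → Matrix (Fin n) (Fin n) ℂ)
    (hF : F = fun t : ℝ =>
      NormedSpace.exp ((-(Complex.I * (t : ℂ) / 2)) • A) *
      NormedSpace.exp ((-(Complex.I * (t : ℂ))) • B) *
      NormedSpace.exp ((-(Complex.I * (t : ℂ) / 2)) • A) *
      NormedSpace.exp ((Complex.I * (t : ℂ)) • (A + B))) :
    F 0 = 1 ∧ ∀ t : ℝ, HasDerivAt F (Complex.I • (A2 A B t * F t)) t := by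
  subst hF
  constructor
  · simp [NormedSpace.exp_zero]
  intro t
  set m1 : Matrix (Fin n) (Fin n) ℂ := (-(Complex.I / 2)) • A with hm1
  set m2 : Matrix (Fin n) (Fin n) ℂ := (-Complex.I) • B with hm2
  set m5 : Matrix (Fin n) (Fin n) ℂ := Complex.I • (A + B) with hm5
  have h1 : HasDerivAt (fun s : ℝ => NormedSpace.exp ((-(Complex.I * (s : ℂ) / 2)) • A))
      (m1 * NormedSpace.exp ((-(Complex.I * (t : ℂ) / 2)) • A)) t :=
    expD A (-(Complex.I / 2)) _ (fun s => by ring) t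
  have h2 : HasDerivAt (fun s : ℝ => NormedSpace.exp ((-(Complex.I * (s : ℂ))) • B))
      (m2 * NormedSpace.exp ((-(Complex.I * (t : ℂ))) • B)) t :=
    expD B (-Complex.I) _ (fun s => by ring) t
  have h5 : HasDerivAt (fun s : ℝ => NormedSpace.exp ((Complex.I * (s : ℂ)) • (A + B)))
      (m5 * NormedSpace.exp ((Complex.I * (t : ℂ)) • (A + B))) t :=
    expD (A + B) Complex.I _ (fun s => by ring) t
  have hfull := ((h1.mul h2).mul h1).mul h5
  refine hfull.congr_deriv (Eq.symm ?_)
  set E1 := NormedSpace.exp ((-(Complex.I * (t : ℂ) / 2)) • A) with hE1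
  set E2 := NormedSpace.exp ((-(Complex.I * (t : ℂ))) • B) with hE2
  set E3 := NormedSpace.exp ((Complex.I * (t : ℂ) / 2) • A) with hE3
  set E4 := NormedSpace.exp ((Complex.I * (t : ℂ)) • B) with hE4
  set E5 := NormedSpace.exp ((Complex.I * (t : ℂ)) • (A + B)) with hE5
  have h31 : E3 * E1 = 1 := by
    rw [hE3, hE1, ← Matrix.exp_add_of_commute]
    · rw [← add_smul]
      norm_num [NormedSpace.exp_zero]
    · exact ((Commute.refl A).smul_left _).smul_right _
  have h42 : E4 * E2 = 1 := by
    rw [hE4, hE2, ← Matrix.exp_add_of_commute]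
    · rw [← add_smul]
      norm_num [NormedSpace.exp_zero]
    · exact ((Commute.refl B).smul_left _).smul_right _
  have c1 : E1 * m1 = m1 * E1 :=
    (((Commute.refl A).smul_left _).smul_right _).exp_left
  have c2 : E2 * m2 = m2 * E2 :=
    (((Commute.refl B).smul_left _).smul_right _).exp_left
  have hm5' : m5 = -(m1 + m1) - m2 := by
    rw [hm5, hm1, hm2]; module
  calc Complex.I • (A2 A B t * (E1 * E2 * E1 * E5))
      = E1 * ((m1 - E2 * m1 * E4) + E2 * (m2 - E1 * m2 * E3) * E4) * E3
          * (E1 * E2 * E1 * E5) := by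
        rw [A2, hm1, hm2, ← hE1, ← hE2, ← hE3, ← hE4]
        simp only [smul_add, smul_sub, smul_smul, mul_smul_comm, smul_mul_assoc,
          sub_mul, add_mul, mul_sub, mul_add, mul_assoc, neg_smul, smul_neg,
          neg_mul, mul_neg]
        module
    _ = ((m1 * E1 * E2 + E1 * (m2 * E2)) * E1 + E1 * E2 * (m1 * E1)) * E5
          + E1 * E2 * E1 * (m5 * E5) := key E1 E2 E3 E4 E5 m1 m2 m5 h31 h42 c1 c2 hm5'
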